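/- Let A be an m×n real matrix with AᵀA invertible and A† = (AᵀA)⁻¹Aᵀ, let φ : ℝᵐ → ℝᵐ be a differentiable bijection, let f : ℝⁿ → ℝⁿ, and let x : ℝ → ℝⁿ be differentiable with x′(t) = f(x(t)) for all t ≥ 0. Define the latent vector field g : ℝᵐ → ℝᵐ by g(w) = Dφ(φ⁻¹(w)) (A f(A† φ⁻¹(w))), and assume g is Lipschitz continuous with constant K. If w : ℝ → ℝᵐ is differentiable with w′(t) = g(w(t)) for all t ≥ 0 and w(0) = φ(A x(0)), then the reconstructed latent solution recovers the original trajectory: A† φ⁻¹(w(t)) = x(t) for all t ≥ 0. -/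

import Mathlib

open Matrix

/-- If the latent vector field g is K-Lipschitz and w solves the
latent ODE w′ = g(w) for t ≥ 0 with w(0) = φ(A x(0)), then the reconstructed
latent solution recovers the original trajectory: A† φ⁻¹(w(t)) = x(t) for all
t ≥ 0. -/
theorem latent_solution_reconstructs {n m : ℕ}
    (A : Matrix (Fin m) (Fin n) ℝ) (hA : IsUnit (Aᵀ * A))
    (φ : (Fin m → ℝ) → (Fin m → ℝ))
    (hφ : Differentiable ℝ φ) (hbij : Function.Bijective φ)
    (f : (Fin n → ℝ) → (Fin n → ℝ))
    (x : ℝ → (Fin n → ℝ)) (hx : Differentiable ℝ x)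
    (hode : ∀ t : ℝ, 0 ≤ t → deriv x t = f (x t))
    (g : (Fin m → ℝ) → (Fin m → ℝ))
    (hg : g = fun w : Fin m → ℝ =>
      fderiv ℝ φ (Function.invFun φ w)
        (A.mulVec (f (((Aᵀ * A)⁻¹ * Aᵀ).mulVec (Function.invFun φ w)))))
    (K : NNReal) (hK : LipschitzWith K g)
    (w : ℝ → (Fin m → ℝ)) (hw : Differentiable ℝ w)
    (hwode : ∀ t : ℝ, 0 ≤ t → deriv w t = g (w t))
    (hw0 : w 0 = φ (A.mulVec (x 0))) :
    ∀ t : ℝ, 0 ≤ t →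
      ((Aᵀ * A)⁻¹ * Aᵀ).mulVec (Function.invFun φ (w t)) = x t := by
  have hinv : Function.LeftInverse (Function.invFun φ) φ :=
    Function.leftInverse_invFun hbij.injective
  have hAA : (Aᵀ * A)⁻¹ * (Aᵀ * A) = 1 :=
    Matrix.nonsing_inv_mul _ (((Matrix.isUnit_iff_isUnit_det _).mp hA))
  have hrecon : ∀ z : Fin n → ℝ,
      ((Aᵀ * A)⁻¹ * Aᵀ).mulVec (A.mulVec z) = z := by
    intro z
    rw [Matrix.mulVec_mulVec, Matrix.mul_assoc, hAA, Matrix.one_mulVec]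
  set L : (Fin n → ℝ) →L[ℝ] (Fin m → ℝ) :=
    LinearMap.toContinuousLinearMap (Matrix.mulVecLin A) with hL
  have hLapp : ∀ z, L z = A.mulVec z := fun z => rfl
  set u : ℝ → (Fin m → ℝ) := fun t => φ (A.mulVec (x t)) with hu
  have hud : ∀ t : ℝ, 0 ≤ t → HasDerivAt u (g (u t)) t := by
    intro t ht
    have h1 : HasDerivAt x (f (x t)) t := by
      have := (hx t).hasDerivAt
      rwa [hode t ht] at this
    have h2 : HasDerivAt (fun s => A.mulVec (x s)) (A.mulVec (f (x t))) t := by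
      simpa [hLapp, Function.comp_def] using (L.hasFDerivAt.comp_hasDerivAt t h1)
    have h3 : HasDerivAt u
        (fderiv ℝ φ (A.mulVec (x t)) (A.mulVec (f (x t)))) t :=
      ((hφ _).hasFDerivAt.comp_hasDerivAt t h2)
    have : g (u t) = fderiv ℝ φ (A.mulVec (x t)) (A.mulVec (f (x t))) := by
      rw [hg]
      simp only [hu, hinv _, hrecon]
    rwa [this]
  have hwu : ∀ t : ℝ, 0 ≤ t → w t = u t := by
    intro t ht
    have := ODE_solution_unique (v := fun _ => g) (f := w) (g := u)
      (a := 0) (b := t) (fun _ => hK)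
      (hw.continuous.continuousOn)
      (fun s hs => by
        have := (hw s).hasDerivAt
        rw [hwode s hs.1] at this
        exact this.hasDerivWithinAt)
      (by
        have : Continuous u := hφ.continuous.comp
          ((L.continuous).comp hx.continuous)
        exact this.continuousOn)
      (fun s hs => ((hud s hs.1).hasDerivWithinAt))
      (by simpa [hu] using hw0)
    exact this ⟨ht, le_rfl⟩
  intro t ht
  rw [hwu t ht, hu]
  simp only [hinv _, hrecon]
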